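/- (Joint continuity of the pathwise integral.) Let a < b be reals and γ, δ ∈ (0,1] with γ + δ > 1. Let ω_m, ω : [a,b] → ℝ be γ-Hölder and W_m, W : [a,b] → ℝ be δ-Hölder (m ∈ ℕ), with [ω_m − ω]_γ → 0, ‖W_m − W‖_∞ → 0, and [W_m − W]_δ → 0 as m → ∞. Suppose 𝐼_m ∈ ℝ is, for each m, the limit of the Riemann sums Σ_k W_m(x_k)(ω_m(x_{k+1}) − ω_m(x_k)) as the partition mesh tends to zero, and 𝐼 ∈ ℝ is the corresponding limit for (W, ω). Then 𝐼_m → 𝐼 as m → ∞. -/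

import Mathlib

open Set Filter

/-- `f` is `r`-Hölder on `[a,b]` with seminorm bound `C`. -/
def HolderBoundOn (C r a b : ℝ) (f : ℝ → ℝ) : Prop :=
  ∀ x ∈ Icc a b, ∀ y ∈ Icc a b, |f x - f y| ≤ C * |x - y| ^ r

/-- `L` is the limit of the Riemann–Stieltjes sums `Σ_k W(x_k)(ω(x_{k+1}) − ω(x_k))` over
partitions `a = x_0 < … < x_n = b` as the mesh tends to zero. -/
def IsRiemannStieltjesLimit (a b : ℝ) (W ω : ℝ → ℝ) (L : ℝ) : Prop :=
  ∀ ε > (0 : ℝ), ∃ ρ > (0 : ℝ), ∀ (n : ℕ) (x : Fin (n + 1) → ℝ),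
    x 0 = a → x (Fin.last n) = b →
    (∀ k : Fin n, x k.castSucc < x k.succ) →
    (∀ k : Fin n, x k.succ - x k.castSucc < ρ) →
    |(∑ k : Fin n, W (x k.castSucc) * (ω (x k.succ) - ω (x k.castSucc))) - L| < ε

noncomputable def ptn (a b : ℝ) (M i : ℕ) : ℝ := a + i * (b - a) / M

noncomputable def RS (a b : ℝ) (W ω : ℝ → ℝ) (M : ℕ) : ℝ :=
  ∑ i ∈ Finset.range M, W (ptn a b M i) * (ω (ptn a b M (i+1)) - ω (ptn a b M i))

lemma ptn_succ_sub (a b : ℝ) (M i : ℕ) : ptn a b M (i+1) - ptn a b M i = (b-a)/M := by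
  unfold ptn; push_cast; ring

lemma ptn_mem {a b : ℝ} (hab : a ≤ b) {M i : ℕ} (hM : 0 < M) (hi : i ≤ M) :
    ptn a b M i ∈ Icc a b := by
  have hM' : (0:ℝ) < M := by exact_mod_cast hM
  have hi' : (i:ℝ) ≤ M := by exact_mod_cast hi
  have hi0 : (0:ℝ) ≤ i := by positivity
  unfold ptn
  constructor
  · have : 0 ≤ (i:ℝ) * (b-a) / M := by
      apply div_nonneg (mul_nonneg hi0 (by linarith)) hM'.le
    linarith
  · have : (i:ℝ) * (b-a) / M ≤ b - a := by
      rw [div_le_iff₀ hM']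
      nlinarith
    linarith

lemma holder_nonneg {C r a b : ℝ} (hab : a < b) {f : ℝ → ℝ}
    (h : HolderBoundOn C r a b f) : 0 ≤ C := by
  have h1 := h a ⟨le_refl a, hab.le⟩ b ⟨hab.le, le_refl b⟩
  have h2 : (0:ℝ) < |a - b| ^ r := Real.rpow_pos_of_pos (abs_pos.mpr (by linarith)) r
  nlinarith [abs_nonneg (f a - f b)]

lemma holder_mono {C C' r a b : ℝ} {f : ℝ → ℝ} (h : HolderBoundOn C r a b f)
    (hC : C ≤ C') : HolderBoundOn C' r a b f := fun x hx y hy =>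
  (h x hx y hy).trans (mul_le_mul_of_nonneg_right hC (Real.rpow_nonneg (abs_nonneg _) r))

lemma holder_add_diff {C1 C2 r a b : ℝ} {f g : ℝ → ℝ}
    (h1 : HolderBoundOn C1 r a b (fun x => f x - g x)) (h2 : HolderBoundOn C2 r a b g) :
    HolderBoundOn (C1 + C2) r a b f := by
  intro x hx y hy
  have e1 := h1 x hx y hy
  have e2 := h2 x hx y hy
  have e : f x - f y = ((f x - g x) - (f y - g y)) + (g x - g y) := by ring
  calc |f x - f y| ≤ |(f x - g x) - (f y - g y)| + |g x - g y| := by rw [e]; exact abs_add_le _ _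
    _ ≤ C1 * |x-y|^r + C2 * |x-y|^r := by simp only at e1; exact add_le_add e1 e2
    _ = (C1 + C2) * |x-y|^r := by ring

lemma sum_range_double {f : ℕ → ℝ} (M : ℕ) :
    ∑ i ∈ Finset.range (2*M), f i = ∑ i ∈ Finset.range M, (f (2*i) + f (2*i+1)) := by
  induction M with
  | zero => simp
  | succ M ih =>
    rw [show 2*(M+1) = (2*M+1)+1 from by ring, Finset.sum_range_succ, Finset.sum_range_succ,
      Finset.sum_range_succ, ih]
    ring

lemma ptn_double (a b : ℝ) {M : ℕ} (hM : 0 < M) (i : ℕ) :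
    ptn a b (2*M) (2*i) = ptn a b M i := by
  have : (M:ℝ) ≠ 0 := by exact_mod_cast hM.ne'
  unfold ptn; push_cast; field_simp

lemma RS_double (hab : a < b) (hγ0 : 0 < γ) (hδ0 : 0 < δ)
    {W ω : ℝ → ℝ} (hW : HolderBoundOn CW δ a b W) (hω : HolderBoundOn Cω γ a b ω)
    (hCW : 0 ≤ CW) (hCω : 0 ≤ Cω) {M : ℕ} (hM : 0 < M) :
    |RS a b W ω (2*M) - RS a b W ω M| ≤
      CW * Cω * (b-a)^(γ+δ) * (2*(M:ℝ))^(-(γ+δ-1)) := by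
  have hM' : (0:ℝ) < M := by exact_mod_cast hM
  have h2M : 0 < 2*M := by omega
  have ht : (0:ℝ) < 2*(M:ℝ) := by linarith
  have hba : (0:ℝ) < b - a := by linarith
  set h : ℝ := (b-a)/(2*(M:ℝ)) with hh
  have hhpos : 0 < h := div_pos hba ht
  have hcast : ((2*M : ℕ):ℝ) = 2*(M:ℝ) := by push_cast; ring
  -- step increments
  have hstep : ∀ j : ℕ, ptn a b (2*M) (j+1) - ptn a b (2*M) j = h := by
    intro j; rw [ptn_succ_sub, hcast]
  -- identity
  have hid : RS a b W ω (2*M) - RS a b W ω M =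
      ∑ i ∈ Finset.range M, (W (ptn a b (2*M) (2*i+1)) - W (ptn a b (2*M) (2*i))) *
        (ω (ptn a b (2*M) (2*i+2)) - ω (ptn a b (2*M) (2*i+1))) := by
    unfold RS
    rw [sum_range_double, ← Finset.sum_sub_distrib]
    apply Finset.sum_congr rfl
    intro i _
    have e1 : ptn a b M i = ptn a b (2*M) (2*i) := (ptn_double a b hM i).symm
    have e2 : ptn a b M (i+1) = ptn a b (2*M) (2*i+2) := by
      rw [show 2*i+2 = 2*(i+1) from by ring, ptn_double a b hM]
    rw [e1, e2]
    ring
  rw [hid]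
  -- bound each term
  have hbound : ∀ i ∈ Finset.range M,
      |(W (ptn a b (2*M) (2*i+1)) - W (ptn a b (2*M) (2*i))) *
        (ω (ptn a b (2*M) (2*i+2)) - ω (ptn a b (2*M) (2*i+1)))| ≤ CW * Cω * h^(γ+δ) := by
    intro i hi
    rw [Finset.mem_range] at hi
    have m0 : ptn a b (2*M) (2*i) ∈ Icc a b := ptn_mem hab.le h2M (by omega)
    have m1 : ptn a b (2*M) (2*i+1) ∈ Icc a b := ptn_mem hab.le h2M (by omega)
    have m2 : ptn a b (2*M) (2*i+2) ∈ Icc a b := ptn_mem hab.le h2M (by omega)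
    have hW1 : |W (ptn a b (2*M) (2*i+1)) - W (ptn a b (2*M) (2*i))| ≤ CW * h^δ := by
      have := hW _ m1 _ m0
      rwa [hstep (2*i), abs_of_pos hhpos] at this
    have hω1 : |ω (ptn a b (2*M) (2*i+2)) - ω (ptn a b (2*M) (2*i+1))| ≤ Cω * h^γ := by
      have := hω _ m2 _ m1
      rwa [show 2*i+2 = (2*i+1)+1 from by ring, hstep (2*i+1), abs_of_pos hhpos] at this
    rw [abs_mul]
    calc |W (ptn a b (2*M) (2*i+1)) - W (ptn a b (2*M) (2*i))| *
          |ω (ptn a b (2*M) (2*i+2)) - ω (ptn a b (2*M) (2*i+1))|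
        ≤ (CW * h^δ) * (Cω * h^γ) := by
          apply mul_le_mul hW1 hω1 (abs_nonneg _)
          positivity
      _ = CW * Cω * h^(γ+δ) := by
          rw [Real.rpow_add hhpos]; ring
  calc |∑ i ∈ Finset.range M, (W (ptn a b (2*M) (2*i+1)) - W (ptn a b (2*M) (2*i))) *
        (ω (ptn a b (2*M) (2*i+2)) - ω (ptn a b (2*M) (2*i+1)))|
      ≤ ∑ i ∈ Finset.range M, |(W (ptn a b (2*M) (2*i+1)) - W (ptn a b (2*M) (2*i))) *
        (ω (ptn a b (2*M) (2*i+2)) - ω (ptn a b (2*M) (2*i+1)))| := Finset.abs_sum_le_sum_abs _ _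
    _ ≤ ∑ _i ∈ Finset.range M, CW * Cω * h^(γ+δ) := Finset.sum_le_sum hbound
    _ = M * (CW * Cω * h^(γ+δ)) := by rw [Finset.sum_const, Finset.card_range]; ring
    _ ≤ CW * Cω * (b-a)^(γ+δ) * (2*(M:ℝ))^(-(γ+δ-1)) := by
        have hhe : h^(γ+δ) = (b-a)^(γ+δ) / (2*(M:ℝ))^(γ+δ) :=
          Real.div_rpow hba.le ht.le _
        have htp : (0:ℝ) < (2*(M:ℝ))^(γ+δ) := Real.rpow_pos_of_pos ht _
        have hte : (2*(M:ℝ))^(-(γ+δ-1)) = (2*(M:ℝ)) * ((2*(M:ℝ))^(γ+δ))⁻¹ := by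
          rw [show -(γ+δ-1) = 1 + -(γ+δ) from by ring, Real.rpow_add ht, Real.rpow_one,
            Real.rpow_neg ht.le]
        rw [hhe, hte]
        have hMt : (M:ℝ) ≤ 2*(M:ℝ) := by linarith
        have hp : (0:ℝ) ≤ (b-a)^(γ+δ) := Real.rpow_nonneg hba.le _
        have hq : (0:ℝ) ≤ ((2*(M:ℝ))^(γ+δ))⁻¹ := by positivity
        calc (M:ℝ) * (CW * Cω * ((b-a)^(γ+δ) / (2*(M:ℝ))^(γ+δ)))
            = (CW * Cω * (b-a)^(γ+δ) * ((2*(M:ℝ))^(γ+δ))⁻¹) * M := by ring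
          _ ≤ (CW * Cω * (b-a)^(γ+δ) * ((2*(M:ℝ))^(γ+δ))⁻¹) * (2*M) := by
              apply mul_le_mul_of_nonneg_left hMt; positivity
          _ = CW * Cω * (b-a)^(γ+δ) * (2*(M:ℝ) * ((2*(M:ℝ))^(γ+δ))⁻¹) := by ring
lemma RS_coarse {a b γ δ CW Cω : ℝ} (hab : a < b) (hγ0 : 0 < γ) (hδ0 : 0 < δ)
    (hsum : 1 < γ + δ)
    {W ω : ℝ → ℝ} (hW : HolderBoundOn CW δ a b W) (hω : HolderBoundOn Cω γ a b ω)
    (hCW : 0 ≤ CW) (hCω : 0 ≤ Cω) {N : ℕ} (hN : 0 < N) (K : ℕ) :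
    |RS a b W ω (N * 2^K) - RS a b W ω N| ≤
      CW * Cω * (b-a)^(γ+δ) * (1 - (2:ℝ)^(-(γ+δ-1)))⁻¹ * (N:ℝ)^(-(γ+δ-1)) := by
  set θ : ℝ := γ + δ - 1 with hθdef
  have hθ : 0 < θ := by simp only [hθdef]; linarith
  have hba : (0:ℝ) < b - a := by linarith
  set BB : ℝ := CW * Cω * (b-a)^(γ+δ) with hBB
  have hBB0 : 0 ≤ BB := by
    apply mul_nonneg (mul_nonneg hCW hCω) (Real.rpow_nonneg hba.le _)
  set r : ℝ := (2:ℝ)^(-θ) with hr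
  have hr0 : 0 ≤ r := Real.rpow_nonneg (by norm_num) _
  have hr1 : r < 1 := Real.rpow_lt_one_of_one_lt_of_neg (by norm_num) (by linarith)
  have hN' : (0:ℝ) < N := by exact_mod_cast hN
  -- partial sum bound
  have key : ∀ K : ℕ, |RS a b W ω (N * 2^K) - RS a b W ω N| ≤
      BB * ∑ k ∈ Finset.range K, (2*((N:ℝ) * 2^k))^(-θ) := by
    intro K
    induction K with
    | zero => simp
    | succ K ih =>
      have hM' : 0 < N * 2^K := by positivity
      have e : N * 2^(K+1) = 2 * (N * 2^K) := by ring
      have hd := RS_double (γ := γ) (δ := δ) hab hγ0 hδ0 hW hω hCW hCω hM'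
      rw [e]
      have tri : |RS a b W ω (2*(N * 2^K)) - RS a b W ω N| ≤
          |RS a b W ω (2*(N * 2^K)) - RS a b W ω (N * 2^K)| +
          |RS a b W ω (N * 2^K) - RS a b W ω N| := abs_sub_le _ _ _
      rw [Finset.sum_range_succ, mul_add]
      have hcast : ((N * 2^K : ℕ):ℝ) = (N:ℝ) * 2^K := by push_cast; ring
      rw [hcast] at hd
      calc |RS a b W ω (2*(N * 2^K)) - RS a b W ω N|
          ≤ |RS a b W ω (2*(N * 2^K)) - RS a b W ω (N * 2^K)| +
            |RS a b W ω (N * 2^K) - RS a b W ω N| := tri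
        _ ≤ BB * (2*((N:ℝ) * 2^K))^(-θ) + BB * ∑ k ∈ Finset.range K, (2*((N:ℝ) * 2^k))^(-θ) := by
            exact add_le_add hd ih
        _ = BB * ∑ k ∈ Finset.range K, (2*((N:ℝ) * 2^k))^(-θ) + BB * (2*((N:ℝ) * 2^K))^(-θ) := by
            ring
  -- geometric bound
  have geo : ∑ k ∈ Finset.range K, (2*((N:ℝ) * 2^k))^(-θ) ≤ (N:ℝ)^(-θ) * (1 - r)⁻¹ := by
    have term : ∀ k : ℕ, (2*((N:ℝ) * 2^k))^(-θ) ≤ (N:ℝ)^(-θ) * r^k := by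
      intro k
      have e1 : 2*((N:ℝ)*2^k) = (N:ℝ) * 2^(k+1) := by ring
      have e2 : ((N:ℝ) * (2:ℝ)^(k+1))^(-θ) = (N:ℝ)^(-θ) * ((2:ℝ)^(k+1))^(-θ) :=
        Real.mul_rpow hN'.le (by positivity)
      have e3 : ((2:ℝ)^(k+1))^(-θ) = r^(k+1) := by
        rw [hr, ← Real.rpow_natCast (2:ℝ) (k+1), ← Real.rpow_natCast ((2:ℝ)^(-θ)) (k+1),
          ← Real.rpow_mul (by norm_num : (0:ℝ) ≤ 2), ← Real.rpow_mul (by norm_num : (0:ℝ) ≤ 2)]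
        ring_nf
      rw [e1, e2, e3]
      exact mul_le_mul_of_nonneg_left (pow_le_pow_of_le_one hr0 hr1.le (Nat.le_succ k))
        (Real.rpow_nonneg hN'.le _)
    calc ∑ k ∈ Finset.range K, (2*((N:ℝ) * 2^k))^(-θ)
        ≤ ∑ k ∈ Finset.range K, (N:ℝ)^(-θ) * r^k :=
          Finset.sum_le_sum (fun k _ => term k)
      _ = (N:ℝ)^(-θ) * ∑ k ∈ Finset.range K, r^k := by rw [Finset.mul_sum]
      _ ≤ (N:ℝ)^(-θ) * (1 - r)⁻¹ := by
          apply mul_le_mul_of_nonneg_left _ (Real.rpow_nonneg hN'.le _)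
          calc ∑ k ∈ Finset.range K, r^k ≤ ∑' k : ℕ, r^k :=
              Summable.sum_le_tsum _ (fun i _ => pow_nonneg hr0 i) (summable_geometric_of_lt_one hr0 hr1)
            _ = (1 - r)⁻¹ := tsum_geometric_of_lt_one hr0 hr1
  calc |RS a b W ω (N * 2^K) - RS a b W ω N|
      ≤ BB * ∑ k ∈ Finset.range K, (2*((N:ℝ) * 2^k))^(-θ) := key K
    _ ≤ BB * ((N:ℝ)^(-θ) * (1 - r)⁻¹) := mul_le_mul_of_nonneg_left geo hBB0
    _ = CW * Cω * (b-a)^(γ+δ) * (1 - (2:ℝ)^(-(γ+δ-1)))⁻¹ * (N:ℝ)^(-(γ+δ-1)) := by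
        rw [hBB, hr, hθdef]; ring

lemma RS_diff_bound {a b γ : ℝ} (hab : a < b) {W ω Wm ωm : ℝ → ℝ} {Cm Cd Ms MW : ℝ}
    (hωm : HolderBoundOn Cm γ a b ωm) (hd : HolderBoundOn Cd γ a b (fun x => ωm x - ω x))
    (hMs : ∀ x ∈ Icc a b, |Wm x - W x| ≤ Ms) (hMW : ∀ x ∈ Icc a b, |W x| ≤ MW)
    {N : ℕ} (hN : 0 < N) :
    |RS a b Wm ωm N - RS a b W ω N| ≤ N * (((b-a)/N)^γ * (Cm * Ms + MW * Cd)) := by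
  have hN' : (0:ℝ) < N := by exact_mod_cast hN
  have hba : (0:ℝ) < b - a := by linarith
  set h : ℝ := (b-a)/N with hh
  have hhpos : 0 < h := div_pos hba hN'
  have hMs0 : 0 ≤ Ms := le_trans (abs_nonneg _) (hMs a ⟨le_refl a, hab.le⟩)
  have hMW0 : 0 ≤ MW := le_trans (abs_nonneg _) (hMW a ⟨le_refl a, hab.le⟩)
  have hCm0 : 0 ≤ Cm := by
    have h1 := hωm a ⟨le_refl a, hab.le⟩ b ⟨hab.le, le_refl b⟩
    have h2 : (0:ℝ) < |a - b| ^ γ := Real.rpow_pos_of_pos (abs_pos.mpr (by linarith)) γ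
    nlinarith [abs_nonneg (ωm a - ωm b)]
  unfold RS
  rw [← Finset.sum_sub_distrib]
  calc |∑ i ∈ Finset.range N, (Wm (ptn a b N i) * (ωm (ptn a b N (i+1)) - ωm (ptn a b N i)) -
        W (ptn a b N i) * (ω (ptn a b N (i+1)) - ω (ptn a b N i)))|
      ≤ ∑ i ∈ Finset.range N, |Wm (ptn a b N i) * (ωm (ptn a b N (i+1)) - ωm (ptn a b N i)) -
        W (ptn a b N i) * (ω (ptn a b N (i+1)) - ω (ptn a b N i))| := Finset.abs_sum_le_sum_abs _ _
    _ ≤ ∑ _i ∈ Finset.range N, (Ms * (Cm * h^γ) + MW * (Cd * h^γ)) := by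
        apply Finset.sum_le_sum
        intro i hi
        rw [Finset.mem_range] at hi
        set p := ptn a b N i with hp
        set q := ptn a b N (i+1) with hq
        have mp : p ∈ Icc a b := ptn_mem hab.le hN (by omega)
        have mq : q ∈ Icc a b := ptn_mem hab.le hN (by omega)
        have hqp : q - p = h := ptn_succ_sub a b N i
        have e : Wm p * (ωm q - ωm p) - W p * (ω q - ω p) =
            (Wm p - W p) * (ωm q - ωm p) + W p * ((ωm q - ω q) - (ωm p - ω p)) := by ring
        have b1 : |(Wm p - W p) * (ωm q - ωm p)| ≤ Ms * (Cm * h^γ) := by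
          rw [abs_mul]
          apply mul_le_mul (hMs p mp) _ (abs_nonneg _) hMs0
          have := hωm q mq p mp
          rwa [hqp, abs_of_pos hhpos] at this
        have b2 : |W p * ((ωm q - ω q) - (ωm p - ω p))| ≤ MW * (Cd * h^γ) := by
          rw [abs_mul]
          apply mul_le_mul (hMW p mp) _ (abs_nonneg _) hMW0
          have := hd q mq p mp
          simp only at this
          rwa [hqp, abs_of_pos hhpos] at this
        calc |Wm p * (ωm q - ωm p) - W p * (ω q - ω p)|
            ≤ |(Wm p - W p) * (ωm q - ωm p)| + |W p * ((ωm q - ω q) - (ωm p - ω p))| := by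
              rw [e]; exact abs_add_le _ _
          _ ≤ Ms * (Cm * h^γ) + MW * (Cd * h^γ) := add_le_add b1 b2
    _ = N * (h^γ * (Cm * Ms + MW * Cd)) := by
        rw [Finset.sum_const, Finset.card_range]; ring

/-- Joint continuity of the pathwise Young integral: if `ω_m, ω` are `γ`-Hölder,
`W_m, W` are `δ`-Hölder with `γ + δ > 1`, and `[ω_m − ω]_γ → 0`, `‖W_m − W‖_∞ → 0`,
`[W_m − W]_δ → 0`, then the pathwise integrals `L_m = ∫_a^b W_m dω_m` converge to
`L₀ = ∫_a^b W dω`. -/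
theorem young_integral_joint_continuity (a b : ℝ) (hab : a < b) (γ δ : ℝ)
    (hγ0 : 0 < γ) (hγ1 : γ ≤ 1) (hδ0 : 0 < δ) (hδ1 : δ ≤ 1) (hsum : 1 < γ + δ)
    (ω W : ℝ → ℝ) (ωm Wm : ℕ → ℝ → ℝ)
    (Cω CW : ℝ) (hω : HolderBoundOn Cω γ a b ω) (hW : HolderBoundOn CW δ a b W)
    (Cωm CWm : ℕ → ℝ)
    (hωm : ∀ m, HolderBoundOn (Cωm m) γ a b (ωm m))
    (hWm : ∀ m, HolderBoundOn (CWm m) δ a b (Wm m))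
    (Cdω : ℕ → ℝ) (hdω : ∀ m, HolderBoundOn (Cdω m) γ a b (fun x => ωm m x - ω x))
    (hdω0 : Tendsto Cdω atTop (nhds 0))
    (CdW : ℕ → ℝ) (hdW : ∀ m, HolderBoundOn (CdW m) δ a b (fun x => Wm m x - W x))
    (hdW0 : Tendsto CdW atTop (nhds 0))
    (Msup : ℕ → ℝ) (hMsup : ∀ m, ∀ x ∈ Icc a b, |Wm m x - W x| ≤ Msup m)
    (hMsup0 : Tendsto Msup atTop (nhds 0))
    (L : ℕ → ℝ) (hL : ∀ m, IsRiemannStieltjesLimit a b (Wm m) (ωm m) (L m))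
    (L₀ : ℝ) (hL₀ : IsRiemannStieltjesLimit a b W ω L₀) :
    Tendsto L atTop (nhds L₀) := by
  have hba : (0:ℝ) < b - a := by linarith
  have hCω0 : 0 ≤ Cω := holder_nonneg hab hω
  have hCW0 : 0 ≤ CW := holder_nonneg hab hW
  have hθ : 0 < γ + δ - 1 := by linarith
  have hWH' : HolderBoundOn (CW+1) δ a b W := holder_mono hW (by linarith)
  have hωH' : HolderBoundOn (Cω+1) γ a b ω := holder_mono hω (by linarith)
  set MW : ℝ := |W a| + CW * (b-a)^δ with hMWdef
  have hMWb : ∀ x ∈ Icc a b, |W x| ≤ MW := by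
    intro x hx
    have h1 := hW x hx a ⟨le_refl a, hab.le⟩
    have h2 : |x - a| ^ δ ≤ (b - a) ^ δ := by
      apply Real.rpow_le_rpow (abs_nonneg _) _ hδ0.le
      rw [abs_le]
      exact ⟨by linarith [hx.1], by linarith [hx.2]⟩
    have h3 : |W x| ≤ |W x - W a| + |W a| := by
      calc |W x| = |(W x - W a) + W a| := by ring_nf
        _ ≤ |W x - W a| + |W a| := abs_add_le _ _
    have h4 : CW * |x - a|^δ ≤ CW * (b-a)^δ := mul_le_mul_of_nonneg_left h2 hCW0
    rw [hMWdef]; linarith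
  set B : ℝ := (CW+1)*(Cω+1)*(b-a)^(γ+δ)*(1 - (2:ℝ)^(-(γ+δ-1)))⁻¹ with hBdef
  have hBnn : 0 ≤ B := by
    have h2 : (2:ℝ)^(-(γ+δ-1)) < 1 :=
      Real.rpow_lt_one_of_one_lt_of_neg (by norm_num) (by linarith)
    have : (0:ℝ) ≤ (1 - (2:ℝ)^(-(γ+δ-1)))⁻¹ := by
      apply inv_nonneg.mpr; linarith
    apply mul_nonneg (by positivity)
    exact this
  rw [Metric.tendsto_atTop]
  intro ε hε
  -- choose N
  have htend : Tendsto (fun N : ℕ => B * (N:ℝ)^(-(γ+δ-1))) atTop (nhds 0) := by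
    have h1 : Tendsto (fun x : ℝ => x^(-(γ+δ-1))) atTop (nhds 0) := tendsto_rpow_neg_atTop hθ
    have h2 := Tendsto.const_mul B (h1.comp tendsto_natCast_atTop_atTop)
    simpa using h2
  obtain ⟨N₁, hN₁⟩ := Metric.tendsto_atTop.mp htend (ε/5) (by linarith)
  set N : ℕ := N₁ + 1 with hNdef
  have hN : 0 < N := Nat.succ_pos _
  have hNB : B * (N:ℝ)^(-(γ+δ-1)) < ε/5 := by
    have := hN₁ N (Nat.le_succ _)
    rw [Real.dist_eq, sub_zero] at this
    exact lt_of_le_of_lt (le_abs_self _) this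
  -- eventual smallness
  have ev1 : ∀ᶠ m in atTop, Cdω m ≤ 1 := hdω0.eventually (eventually_le_nhds one_pos)
  have ev2 : ∀ᶠ m in atTop, CdW m ≤ 1 := hdW0.eventually (eventually_le_nhds one_pos)
  have gt0 : Tendsto (fun m => (N:ℝ) * (((b-a)/(N:ℝ))^γ * ((Cω+1) * Msup m + MW * Cdω m)))
      atTop (nhds 0) := by
    have h := (((hMsup0.const_mul (Cω+1)).add (hdω0.const_mul MW)).const_mul
      (((b-a)/(N:ℝ))^γ)).const_mul (N:ℝ)
    simpa using h
  have ev3 : ∀ᶠ m in atTop,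
      (N:ℝ) * (((b-a)/(N:ℝ))^γ * ((Cω+1) * Msup m + MW * Cdω m)) < ε/5 :=
    gt0.eventually (eventually_lt_nhds (by linarith))
  obtain ⟨m₀, hm₀⟩ := eventually_atTop.mp ((ev1.and ev2).and ev3)
  refine ⟨m₀, fun m hm => ?_⟩
  obtain ⟨⟨e1, e2⟩, e3⟩ := hm₀ m hm
  rw [Real.dist_eq]
  -- Hölder bounds for the m-th pair
  have hωmH : HolderBoundOn (Cω+1) γ a b (ωm m) :=
    holder_mono (holder_add_diff (hdω m) hω) (by linarith)
  have hWmH : HolderBoundOn (CW+1) δ a b (Wm m) :=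
    holder_mono (holder_add_diff (hdW m) hW) (by linarith)
  obtain ⟨ρ1, hρ1, hP1⟩ := hL m (ε/5) (by linarith)
  obtain ⟨ρ0, hρ0, hP0⟩ := hL₀ (ε/5) (by linarith)
  have hρ : 0 < min ρ1 ρ0 := lt_min hρ1 hρ0
  obtain ⟨K, hK⟩ := pow_unbounded_of_one_lt ((b-a)/min ρ1 ρ0) (one_lt_two (α := ℝ))
  set n : ℕ := N * 2^K with hndef
  have hn0 : 0 < n := by positivity
  have hn' : (0:ℝ) < n := by exact_mod_cast hn0
  have hmesh : (b-a)/(n:ℝ) < min ρ1 ρ0 := by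
    have h2 : (2:ℝ)^K ≤ (n:ℝ) := by
      have : (1:ℕ) ≤ N := hN
      have : ((2:ℕ)^K : ℝ) ≤ ((N * 2^K : ℕ) : ℝ) := by
        exact_mod_cast Nat.le_mul_of_pos_left _ hN
      simpa [hndef] using this
    have h3 : (b-a)/min ρ1 ρ0 < (n:ℝ) := lt_of_lt_of_le hK h2
    rw [div_lt_iff₀ hn']
    have := (div_lt_iff₀ hρ).mp h3
    linarith
  set x : Fin (n+1) → ℝ := fun i => ptn a b n (i:ℕ) with hxdef
  have hx0 : x 0 = a := by simp [hxdef, ptn]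
  have hxl : x (Fin.last n) = b := by
    simp only [hxdef, ptn, Fin.val_last]
    have : (n:ℝ) ≠ 0 := hn'.ne'
    field_simp
    ring
  have hstep : ∀ k : Fin n, x k.succ - x k.castSucc = (b-a)/(n:ℝ) := by
    intro k
    simp only [hxdef, Fin.val_succ, Fin.coe_castSucc]
    exact ptn_succ_sub a b n k
  have hmono : ∀ k : Fin n, x k.castSucc < x k.succ := by
    intro k
    have h1 := hstep k
    have h2 : 0 < (b-a)/(n:ℝ) := div_pos hba hn'
    linarith
  have hmesh1 : ∀ k : Fin n, x k.succ - x k.castSucc < ρ1 := by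
    intro k; rw [hstep k]; exact lt_of_lt_of_le hmesh (min_le_left _ _)
  have hmesh0 : ∀ k : Fin n, x k.succ - x k.castSucc < ρ0 := by
    intro k; rw [hstep k]; exact lt_of_lt_of_le hmesh (min_le_right _ _)
  have hsum_m : (∑ k : Fin n, Wm m (x k.castSucc) * (ωm m (x k.succ) - ωm m (x k.castSucc)))
      = RS a b (Wm m) (ωm m) n := by
    rw [RS, ← Fin.sum_univ_eq_sum_range]
    exact Finset.sum_congr rfl fun k _ => by
      simp [hxdef, Fin.val_succ, Fin.coe_castSucc]
  have hsum_0 : (∑ k : Fin n, W (x k.castSucc) * (ω (x k.succ) - ω (x k.castSucc)))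
      = RS a b W ω n := by
    rw [RS, ← Fin.sum_univ_eq_sum_range]
    exact Finset.sum_congr rfl fun k _ => by
      simp [hxdef, Fin.val_succ, Fin.coe_castSucc]
  have h1 := hP1 n x hx0 hxl hmono hmesh1
  rw [hsum_m, abs_sub_comm] at h1
  have h5 := hP0 n x hx0 hxl hmono hmesh0
  rw [hsum_0] at h5
  have h2 : |RS a b (Wm m) (ωm m) n - RS a b (Wm m) (ωm m) N| < ε/5 := by
    have hc := RS_coarse hab hγ0 hδ0 hsum hWmH hωmH (by linarith) (by linarith) hN K
    calc |RS a b (Wm m) (ωm m) n - RS a b (Wm m) (ωm m) N|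
        ≤ (CW+1) * (Cω+1) * (b-a)^(γ+δ) * (1 - (2:ℝ)^(-(γ+δ-1)))⁻¹ * (N:ℝ)^(-(γ+δ-1)) := hc
      _ = B * (N:ℝ)^(-(γ+δ-1)) := by rw [hBdef]
      _ < ε/5 := hNB
  have h4 : |RS a b W ω N - RS a b W ω n| < ε/5 := by
    have hc := RS_coarse hab hγ0 hδ0 hsum hWH' hωH' (by linarith) (by linarith) hN K
    rw [abs_sub_comm]
    calc |RS a b W ω n - RS a b W ω N|
        ≤ (CW+1) * (Cω+1) * (b-a)^(γ+δ) * (1 - (2:ℝ)^(-(γ+δ-1)))⁻¹ * (N:ℝ)^(-(γ+δ-1)) := hc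
      _ = B * (N:ℝ)^(-(γ+δ-1)) := by rw [hBdef]
      _ < ε/5 := hNB
  have h3 : |RS a b (Wm m) (ωm m) N - RS a b W ω N| < ε/5 := by
    have hc := RS_diff_bound hab hωmH (hdω m) (hMsup m) hMWb hN
    exact lt_of_le_of_lt hc e3
  have c0 : |L m - L₀| ≤ |L m - RS a b (Wm m) (ωm m) n| + |RS a b (Wm m) (ωm m) n - L₀| :=
    abs_sub_le _ _ _
  have c1 : |RS a b (Wm m) (ωm m) n - L₀| ≤
      |RS a b (Wm m) (ωm m) n - RS a b (Wm m) (ωm m) N| + |RS a b (Wm m) (ωm m) N - L₀| :=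
    abs_sub_le _ _ _
  have c2 : |RS a b (Wm m) (ωm m) N - L₀| ≤
      |RS a b (Wm m) (ωm m) N - RS a b W ω N| + |RS a b W ω N - L₀| := abs_sub_le _ _ _
  have c3 : |RS a b W ω N - L₀| ≤ |RS a b W ω N - RS a b W ω n| + |RS a b W ω n - L₀| :=
    abs_sub_le _ _ _
  linarith
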